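/- arXiv:1211.5066 — 3 statements merged into one kernel-verified Lean document; each statement's English description precedes it below -/
import Mathlib

section
/- Let $F_1,\dots,F_N$ be $\mathbb{R}$-linearly independent elements of $L^1(X,\nu)$ and $\epsilon>0$. Then there exist $\mathbb{R}$-linearly independent simple functions $s_1,\dots,s_N$ and $\mathbb{R}$-linearly independent simple functions $t_1,\dots,t_N$ on $X$ such that $\sum_{l=1}^N\|F_l-s_l\|_1 < \epsilon$, $\sum_{l=1}^N\|F_l-t_l\|_1 < \epsilon$, and for all $\xi\in\mathbb{R}^N$ one has $\|\sum_l \xi_l s_l\|_1 \le \|\sum_l \xi_l F_l\|_1 \le \|\sum_l \xi_l t_l\|_1$. -/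
open MeasureTheory

private lemma bridge {X : Type*} [MeasurableSpace X] (ν : Measure X) {N : ℕ}
    (G : Fin N → X → ℝ) (hG : ∀ l, Integrable (G l) ν) (ξ : Fin N → ℝ) :
    (∫ x, |∑ l, ξ l * G l x| ∂ν) = ‖∑ l, ξ l • (hG l).toL1 (G l)‖ := by
  classical
  have key : ∀ u : Finset (Fin N), ∀ h : Integrable (fun x => ∑ l ∈ u, ξ l * G l x) ν,
      (∑ l ∈ u, ξ l • (hG l).toL1 (G l)) = h.toL1 _ := by
    intro u
    induction u using Finset.induction_on with
    | empty =>
      intro h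
      simp only [Finset.sum_empty]
      exact (Integrable.toL1_zero h).symm
    | insert a u' hm ih =>
      intro h
      have hu : Integrable (fun x => ∑ l ∈ u', ξ l * G l x) ν :=
        integrable_finset_sum _ fun l _ => (hG l).const_mul (ξ l)
      have ha : Integrable (fun x => ξ a * G a x) ν := (hG a).const_mul (ξ a)
      simp only [Finset.sum_insert hm]
      rw [ih hu]
      have h1 : ξ a • (hG a).toL1 (G a) = ha.toL1 (fun x => ξ a * G a x) :=
        (Integrable.toL1_smul (G a) (hG a) (ξ a)).symm
      rw [h1]
      exact (Integrable.toL1_add _ _ ha hu).symm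
  have hInt : Integrable (fun x => ∑ l, ξ l * G l x) ν :=
    integrable_finset_sum _ fun l _ => (hG l).const_mul (ξ l)
  rw [key Finset.univ hInt, L1.norm_of_fun_eq_integral_norm hInt]
  simp [Real.norm_eq_abs]

private lemma abs_int_eq {X : Type*} [MeasurableSpace X] {ν : Measure X} {h : X → ℝ}
    (hh : Integrable h ν) : ∫ x, |h x| ∂ν = (eLpNorm h 1 ν).toReal := by
  rw [eLpNorm_one_eq_lintegral_enorm,
    ← integral_norm_eq_lintegral_enorm hh.aestronglyMeasurable]
  simp [Real.norm_eq_abs]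

set_option maxHeartbeats 2000000 in
/-- Lemma 4: approximation of linearly independent `L¹` functions from below and
above by linearly independent simple functions. -/
theorem stmt3 {X : Type*} [MeasurableSpace X] (ν : Measure X)
    (N : ℕ) (F : Fin N → X → ℝ) (hF : ∀ l, Integrable (F l) ν)
    (hind : ∀ ξ : Fin N → ℝ, (∫ x, |∑ l, ξ l * F l x| ∂ν) = 0 → ξ = 0)
    (ε : ℝ) (hε : 0 < ε) :
    ∃ s t : Fin N → SimpleFunc X ℝ,
      (∀ l, Integrable (s l) ν) ∧ (∀ l, Integrable (t l) ν) ∧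
      (∀ ξ : Fin N → ℝ, (∫ x, |∑ l, ξ l * s l x| ∂ν) = 0 → ξ = 0) ∧
      (∀ ξ : Fin N → ℝ, (∫ x, |∑ l, ξ l * t l x| ∂ν) = 0 → ξ = 0) ∧
      (∑ l, ∫ x, |F l x - s l x| ∂ν) < ε ∧
      (∑ l, ∫ x, |F l x - t l x| ∂ν) < ε ∧
      (∀ ξ : Fin N → ℝ,
        (∫ x, |∑ l, ξ l * s l x| ∂ν) ≤ (∫ x, |∑ l, ξ l * F l x| ∂ν) ∧
        (∫ x, |∑ l, ξ l * F l x| ∂ν) ≤ (∫ x, |∑ l, ξ l * t l x| ∂ν)) := by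
  classical
  rcases Nat.eq_zero_or_pos N with hN0 | hNpos
  · subst hN0
    exact ⟨fun l => l.elim0, fun l => l.elim0, fun l => l.elim0, fun l => l.elim0,
      fun ξ _ => funext fun l => l.elim0, fun ξ _ => funext fun l => l.elim0,
      by simpa using hε, by simpa using hε, fun ξ => by simp⟩
  -- the linear map into L¹
  set f : Fin N → (X →₁[ν] ℝ) := fun l => (hF l).toL1 (F l) with hfdef
  let T : (Fin N → ℝ) →ₗ[ℝ] (X →₁[ν] ℝ) :=
    { toFun := fun ξ => ∑ l, ξ l • f l
      map_add' := fun ξ ζ => by simp [add_smul, Finset.sum_add_distrib]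
      map_smul' := fun c ξ => by simp [smul_smul, Finset.smul_sum] }
  have hTF : ∀ ξ : Fin N → ℝ, (∫ x, |∑ l, ξ l * F l x| ∂ν) = ‖T ξ‖ :=
    fun ξ => bridge ν F hF ξ
  have hker : LinearMap.ker T = ⊥ := by
    rw [LinearMap.ker_eq_bot']
    intro ξ hξ
    apply hind
    rw [hTF, hξ, norm_zero]
  obtain ⟨m, hm0, hTlow⟩ : ∃ m : ℝ, 0 < m ∧ ∀ ξ : Fin N → ℝ, m * ‖ξ‖ ≤ ‖T ξ‖ := by
    obtain ⟨K, hK0, hKlip⟩ := T.exists_antilipschitzWith hker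
    have hKR : (0 : ℝ) < (K : ℝ) := by exact_mod_cast hK0
    refine ⟨(K:ℝ)⁻¹, by positivity, fun ξ => ?_⟩
    have h1 : dist ξ 0 ≤ (K : ℝ) * dist (T ξ) (T 0) := hKlip.le_mul_dist ξ 0
    simp only [dist_zero_right, map_zero, dist_eq_norm, sub_zero] at h1
    calc (K:ℝ)⁻¹ * ‖ξ‖ ≤ (K:ℝ)⁻¹ * ((K : ℝ) * ‖T ξ‖) :=
          mul_le_mul_of_nonneg_left h1 (by positivity)
      _ = ‖T ξ‖ := by field_simp
  -- constants
  obtain ⟨M, hMdef, hM0⟩ : ∃ M : ℝ, M = (∑ l, ∫ x, |F l x| ∂ν) ∧ 0 ≤ M :=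
    ⟨_, rfl, Finset.sum_nonneg fun l _ => integral_nonneg fun x => abs_nonneg _⟩
  obtain ⟨η, hη0, hηhalf, hηM⟩ : ∃ η : ℝ, 0 < η ∧ η ≤ 1/2 ∧ η * (M+1) ≤ ε/4 := by
    refine ⟨min (1/2) (ε/(4*(M+1))), lt_min (by norm_num) (by positivity),
      min_le_left _ _, ?_⟩
    have h1 : min (1/2) (ε/(4*(M+1))) ≤ ε/(4*(M+1)) := min_le_right _ _
    have h2 : (0:ℝ) < M + 1 := by linarith
    calc min (1/2) (ε/(4*(M+1))) * (M+1) ≤ (ε/(4*(M+1)))*(M+1) :=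
          mul_le_mul_of_nonneg_right h1 h2.le
      _ = ε/4 := by field_simp
  have hNR : (0:ℝ) < (N:ℝ) := by exact_mod_cast hNpos
  obtain ⟨δ, hδ0, hNδ1, hNδ2, hNδ3⟩ :
      ∃ δ : ℝ, 0 < δ ∧ (N:ℝ)*δ ≤ η*m/2 ∧ (N:ℝ)*δ ≤ 1 ∧ (N:ℝ)*δ ≤ ε/4 := by
    refine ⟨min (η*m/(2*N)) (min (1/N) (ε/(4*N))),
      lt_min (by positivity) (lt_min (by positivity) (by positivity)), ?_, ?_, ?_⟩
    · have h1 : min (η*m/(2*N)) (min (1/N) (ε/(4*N))) ≤ η*m/(2*N) := min_le_left _ _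
      calc (N:ℝ) * min (η*m/(2*N)) (min (1/N) (ε/(4*N))) ≤ (N:ℝ)*(η*m/(2*N)) :=
            mul_le_mul_of_nonneg_left h1 hNR.le
        _ = η*m/2 := by field_simp
    · have h1 : min (η*m/(2*N)) (min (1/N) (ε/(4*N))) ≤ 1/N :=
        (min_le_right _ _).trans (min_le_left _ _)
      calc (N:ℝ) * min (η*m/(2*N)) (min (1/N) (ε/(4*N))) ≤ (N:ℝ)*(1/N) :=
            mul_le_mul_of_nonneg_left h1 hNR.le
        _ = 1 := by field_simp
    · have h1 : min (η*m/(2*N)) (min (1/N) (ε/(4*N))) ≤ ε/(4*N) :=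
        (min_le_right _ _).trans (min_le_right _ _)
      calc (N:ℝ) * min (η*m/(2*N)) (min (1/N) (ε/(4*N))) ≤ (N:ℝ)*(ε/(4*N)) :=
            mul_le_mul_of_nonneg_left h1 hNR.le
        _ = ε/4 := by field_simp
  -- simple approximations
  have hδ0' : ENNReal.ofReal δ ≠ 0 := by
    simp only [ne_eq, ENNReal.ofReal_eq_zero, not_le]
    exact hδ0
  choose φ hφa hφb using fun l =>
    (memLp_one_iff_integrable.mpr (hF l)).exists_simpleFunc_eLpNorm_sub_lt (by simp) hδ0'
  have hφint : ∀ l, Integrable (⇑(φ l)) ν := fun l => memLp_one_iff_integrable.mp (hφb l)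
  have hsubint : ∀ l, Integrable (fun x => F l x - φ l x) ν := fun l => (hF l).sub (hφint l)
  have hd : ∀ l, (∫ x, |F l x - φ l x| ∂ν) ≤ δ := by
    intro l
    have h1 : (∫ x, |F l x - φ l x| ∂ν) = (eLpNorm (F l - ⇑(φ l)) 1 ν).toReal := by
      have h2 := abs_int_eq (ν := ν) (h := F l - ⇑(φ l)) ((hF l).sub (hφint l))
      simpa [Pi.sub_apply] using h2
    rw [h1]
    exact ENNReal.toReal_le_of_le_ofReal hδ0.le (hφa l).le
  set g : Fin N → (X →₁[ν] ℝ) := fun l => (hφint l).toL1 (⇑(φ l)) with hgdef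
  have hPφ : ∀ ξ : Fin N → ℝ, (∫ x, |∑ l, ξ l * φ l x| ∂ν) = ‖∑ l, ξ l • g l‖ :=
    fun ξ => bridge ν (fun l => ⇑(φ l)) hφint ξ
  have hdiff : ∀ ξ : Fin N → ℝ, ‖T ξ - ∑ l, ξ l • g l‖ ≤ ‖ξ‖ * ((N:ℝ)*δ) := by
    intro ξ
    have h1 : T ξ - ∑ l, ξ l • g l = ∑ l, ξ l • (f l - g l) := by
      show (∑ l, ξ l • f l) - ∑ l, ξ l • g l = _
      rw [← Finset.sum_sub_distrib]
      exact Finset.sum_congr rfl fun l _ => (smul_sub _ _ _).symm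
    rw [h1]
    calc ‖∑ l, ξ l • (f l - g l)‖ ≤ ∑ l, ‖ξ l • (f l - g l)‖ := norm_sum_le _ _
      _ ≤ ∑ _l : Fin N, ‖ξ‖ * δ := by
          refine Finset.sum_le_sum fun l _ => ?_
          rw [norm_smul]
          have h2 : ‖f l - g l‖ ≤ δ := by
            have h3 : f l - g l = ((hF l).sub (hφint l)).toL1 (F l - ⇑(φ l)) :=
              (Integrable.toL1_sub _ _ (hF l) (hφint l)).symm
            rw [h3, L1.norm_of_fun_eq_integral_norm]
            simpa [Pi.sub_apply, Real.norm_eq_abs] using hd l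
          exact mul_le_mul (norm_le_pi_norm ξ l) h2 (norm_nonneg _) (norm_nonneg _)
      _ = ‖ξ‖ * ((N:ℝ)*δ) := by
          rw [Finset.sum_const, Finset.card_univ, Fintype.card_fin, nsmul_eq_mul]
          ring
  have hPlow : ∀ ξ : Fin N → ℝ, (m/2) * ‖ξ‖ ≤ ‖∑ l, ξ l • g l‖ := by
    intro ξ
    have h1 := hdiff ξ
    have h2 := hTlow ξ
    have h3 : ‖T ξ‖ - ‖∑ l, ξ l • g l‖ ≤ ‖ξ‖*((N:ℝ)*δ) := (norm_sub_norm_le _ _).trans h1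
    have h4 := mul_le_mul_of_nonneg_left hNδ1 (norm_nonneg ξ)
    nlinarith [norm_nonneg ξ, mul_le_mul_of_nonneg_left hηhalf hm0.le]
  -- the scaling identity
  have hscale : ∀ (c : ℝ), 0 ≤ c → ∀ ξ : Fin N → ℝ,
      (∫ x, |∑ l, ξ l * (c • φ l) x| ∂ν) = c * ‖∑ l, ξ l • g l‖ := by
    intro c hc ξ
    have h1 : ∀ x, |∑ l, ξ l * (c • φ l) x| = c * |∑ l, ξ l * φ l x| := by
      intro x
      have h2 : (∑ l, ξ l * (c • φ l) x) = c * ∑ l, ξ l * φ l x := by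
        rw [Finset.mul_sum]
        refine Finset.sum_congr rfl fun l _ => ?_
        rw [SimpleFunc.coe_smul]
        simp only [Pi.smul_apply, smul_eq_mul]
        ring
      rw [h2, abs_mul, abs_of_nonneg hc]
    simp_rw [h1]
    rw [integral_const_mul, hPφ ξ]
  have hsint : ∀ (c : ℝ) l, Integrable (⇑(c • φ l)) ν := by
    intro c l
    rw [SimpleFunc.coe_smul]
    exact (hφint l).smul c
  clear_value f T g
  -- closeness
  have hφle : ∀ l, (∫ x, |φ l x| ∂ν) ≤ (∫ x, |F l x| ∂ν) + δ := by
    intro l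
    have h1 : (∫ x, |φ l x| ∂ν) ≤ ∫ x, (|F l x| + |F l x - φ l x|) ∂ν := by
      refine integral_mono (hφint l).abs ((hF l).abs.add (hsubint l).abs) fun x => ?_
      calc |φ l x| = |F l x - (F l x - φ l x)| := by ring_nf
        _ ≤ |F l x| + |F l x - φ l x| := abs_sub _ _
    rw [integral_add (hF l).abs (hsubint l).abs] at h1
    linarith [hd l]
  have hclose : ∀ (c : ℝ), |1 - c| ≤ η → (∑ l, ∫ x, |F l x - (c • φ l) x| ∂ν) < ε := by
    intro c hc
    have key : ∀ l, (∫ x, |F l x - (c • φ l) x| ∂ν) ≤ δ + η * ((∫ x, |F l x| ∂ν) + δ) := by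
      intro l
      have hint1 : Integrable (fun x => F l x - (c • φ l) x) ν := (hF l).sub (hsint c l)
      have hpt : ∀ x, |F l x - (c • φ l) x| ≤ |F l x - φ l x| + η * |φ l x| := by
        intro x
        have h2 : (c • φ l) x = c * φ l x := by
          rw [SimpleFunc.coe_smul]; simp [smul_eq_mul]
        rw [h2]
        calc |F l x - c * φ l x| = |(F l x - φ l x) + (1 - c) * φ l x| := by ring_nf
          _ ≤ |F l x - φ l x| + |(1-c) * φ l x| := abs_add_le _ _
          _ ≤ |F l x - φ l x| + η * |φ l x| := by
              rw [abs_mul]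
              have := mul_le_mul_of_nonneg_right hc (abs_nonneg (φ l x))
              linarith
      have h5 : (∫ x, |F l x - (c • φ l) x| ∂ν)
          ≤ (∫ x, |F l x - φ l x| ∂ν) + η * ∫ x, |φ l x| ∂ν := by
        calc (∫ x, |F l x - (c • φ l) x| ∂ν)
            ≤ ∫ x, (|F l x - φ l x| + η * |φ l x|) ∂ν :=
              integral_mono hint1.abs ((hsubint l).abs.add ((hφint l).abs.const_mul η)) hpt
          _ = (∫ x, |F l x - φ l x| ∂ν) + η * ∫ x, |φ l x| ∂ν := by
              rw [integral_add (hsubint l).abs ((hφint l).abs.const_mul η), integral_const_mul]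
      have h6 := mul_le_mul_of_nonneg_left (hφle l) hη0.le
      linarith [hd l]
    calc (∑ l, ∫ x, |F l x - (c • φ l) x| ∂ν)
        ≤ ∑ _l : Fin N, (δ + η * ((∫ x, |F _l x| ∂ν) + δ)) := Finset.sum_le_sum fun l _ => key l
      _ = (N:ℝ)*δ + η*(M + (N:ℝ)*δ) := by
          rw [Finset.sum_add_distrib, Finset.sum_const, Finset.card_univ, Fintype.card_fin,
            nsmul_eq_mul, ← Finset.mul_sum, Finset.sum_add_distrib, Finset.sum_const,
            Finset.card_univ, Fintype.card_fin, nsmul_eq_mul, ← hMdef]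
          try ring
      _ < ε := by nlinarith [mul_le_mul_of_nonneg_left hNδ2 hη0.le]
  -- assemble
  refine ⟨fun l => (1-η) • φ l, fun l => (1+η) • φ l, fun l => hsint _ l, fun l => hsint _ l,
    ?_, ?_, ?_, ?_, ?_⟩
  · intro ξ hξ
    rw [hscale (1-η) (by linarith) ξ] at hξ
    have hb : ‖∑ l, ξ l • g l‖ = 0 := by
      have h1 : (0:ℝ) < 1 - η := by linarith
      exact (mul_eq_zero.mp hξ).resolve_left (by linarith)
    have h2 := hPlow ξ
    rw [hb] at h2
    have h3 : ‖ξ‖ = 0 := le_antisymm (by nlinarith) (norm_nonneg ξ)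
    exact norm_eq_zero.mp h3
  · intro ξ hξ
    rw [hscale (1+η) (by linarith) ξ] at hξ
    have hb : ‖∑ l, ξ l • g l‖ = 0 :=
      (mul_eq_zero.mp hξ).resolve_left (by linarith)
    have h2 := hPlow ξ
    rw [hb] at h2
    have h3 : ‖ξ‖ = 0 := le_antisymm (by nlinarith) (norm_nonneg ξ)
    exact norm_eq_zero.mp h3
  · exact hclose (1-η) (by rw [show (1:ℝ) - (1-η) = η by ring, abs_of_nonneg hη0.le])
  · exact hclose (1+η) (by rw [show (1:ℝ) - (1+η) = -η by ring, abs_neg, abs_of_nonneg hη0.le])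
  · intro ξ
    rw [hscale (1-η) (by linarith) ξ, hscale (1+η) (by linarith) ξ, hTF ξ]
    have h1 := hdiff ξ
    have h2 := hTlow ξ
    have h3 : ‖T ξ‖ - ‖∑ l, ξ l • g l‖ ≤ ‖ξ‖*((N:ℝ)*δ) := (norm_sub_norm_le _ _).trans h1
    have h4 : ‖∑ l, ξ l • g l‖ - ‖T ξ‖ ≤ ‖ξ‖*((N:ℝ)*δ) :=
      (norm_sub_norm_le _ _).trans ((norm_sub_rev _ _).le.trans h1)
    have h5 := mul_le_mul_of_nonneg_left hNδ1 (norm_nonneg ξ)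
    constructor
    · nlinarith [norm_nonneg ξ, norm_nonneg (T ξ), norm_nonneg (∑ l, ξ l • g l),
        mul_le_mul_of_nonneg_left h2 hη0.le]
    · nlinarith [norm_nonneg ξ, hPlow ξ, mul_le_mul_of_nonneg_left (hPlow ξ) hη0.le]
end

section
/- Let $T:\mathbb{R}^N \to L^1(X,\nu)$ be the injective linear map $T(\xi) = \sum_{n=1}^N \xi_n F_n$, where $F_1,\dots,F_N$ are $\mathbb{R}$-linearly independent in $L^1(X,\nu)$. Then there exists a finite, even Borel measure $\rho$ on the unit sphere $\Sigma_{N-1}\subset\mathbb{R}^N$ such that $\|T(\xi)\|_1 = \tfrac12 \int_{\Sigma_{N-1}} |\langle \xi,\eta\rangle|\,d\rho(\eta)$ for all $\xi\in\mathbb{R}^N$. -/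
open MeasureTheory

/-- Lemma 2: the norm `ξ ↦ ‖T ξ‖₁ = ∫ |∑ ξ n F n| dν` is the support-type
integral of a finite even Borel measure on the unit sphere, i.e. the unit ball
of this norm is dual to a zonoid. -/
theorem stmt5 {X : Type*} [MeasurableSpace X] (ν : Measure X)
    (N : ℕ) (F : Fin N → X → ℝ) (hF : ∀ n, Integrable (F n) ν)
    (hind : ∀ ξ : Fin N → ℝ, (∫ x, |∑ n, ξ n * F n x| ∂ν) = 0 → ξ = 0) :
    ∃ ρ : Measure (Fin N → ℝ), IsFiniteMeasure ρ ∧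
      ρ.map (fun η => -η) = ρ ∧
      ρ {η : Fin N → ℝ | (∑ i, (η i) ^ 2) ≠ 1} = 0 ∧
      ∀ ξ : Fin N → ℝ,
        (∫ x, |∑ n, ξ n * F n x| ∂ν) = (1 / 2) * ∫ η, |∑ i, ξ i * η i| ∂ρ := by
  classical
  -- measurable representatives
  set f : Fin N → X → ℝ := fun n => (hF n).1.aemeasurable.mk (F n) with hf_def
  have hfm : ∀ n, Measurable (f n) := fun n => (hF n).1.aemeasurable.measurable_mk
  have hfe : ∀ n, F n =ᵐ[ν] f n := fun n => (hF n).1.aemeasurable.ae_eq_mk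
  have hfi : ∀ n, Integrable (f n) ν := fun n => (hF n).congr (hfe n)
  -- the Euclidean norm of the vector (f n x)
  set w : X → ℝ := fun x => Real.sqrt (∑ i, (f i x) ^ 2) with hw_def
  have hwm : Measurable w :=
    (Finset.measurable_sum _ (fun i _ => (hfm i).pow_const 2)).sqrt
  have hw0 : ∀ x, 0 ≤ w x := fun x => Real.sqrt_nonneg _
  have hwz : ∀ x, w x = 0 → ∀ i, f i x = 0 := by
    intro x hx i
    have hs : (∑ j, (f j x) ^ 2) = 0 := by
      have := Real.sqrt_eq_zero'.mp hx
      have hnn : 0 ≤ ∑ j, (f j x) ^ 2 := Finset.sum_nonneg fun j _ => sq_nonneg _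
      nlinarith [this]
    have := (Finset.sum_eq_zero_iff_of_nonneg (fun j _ => sq_nonneg (f j x))).mp hs
      i (Finset.mem_univ i)
    exact pow_eq_zero_iff (n := 2) (by norm_num) |>.mp this
  have hwle : ∀ x, w x ≤ ∑ i, |f i x| := by
    intro x
    have h1 : (∑ i, (f i x) ^ 2) ≤ (∑ i, |f i x|) ^ 2 := by
      calc (∑ i, (f i x) ^ 2) = ∑ i, |f i x| ^ 2 := by simp [sq_abs]
        _ ≤ (∑ i, |f i x|) ^ 2 :=
          Finset.sum_sq_le_sq_sum_of_nonneg (fun i _ => abs_nonneg _)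
    calc w x ≤ Real.sqrt ((∑ i, |f i x|) ^ 2) := Real.sqrt_le_sqrt h1
      _ = ∑ i, |f i x| := Real.sqrt_sq (Finset.sum_nonneg fun i _ => abs_nonneg _)
  have hwint : Integrable w ν := by
    refine (integrable_finset_sum Finset.univ (fun i _ => (hfi i).abs)).mono'
      hwm.aestronglyMeasurable ?_
    filter_upwards with x
    rw [Real.norm_eq_abs, abs_of_nonneg (hw0 x)]
    exact hwle x
  -- the weighted measure and normalized map
  set μ : Measure X := ν.withDensity (fun x => ((w x).toNNReal : ENNReal)) with hμ_def
  have hμfin : IsFiniteMeasure μ := by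
    constructor
    rw [hμ_def, withDensity_apply _ MeasurableSet.univ]
    simp only [Measure.restrict_univ]
    have : (∫⁻ x, ((w x).toNNReal : ENNReal) ∂ν) = ∫⁻ x, ‖w x‖₊ ∂ν := by
      refine lintegral_congr fun x => ?_
      congr 1
      simp [Real.nnnorm_of_nonneg (hw0 x), Real.toNNReal_of_nonneg (hw0 x)]
    rw [this]
    exact hwint.hasFiniteIntegral
  set φ : X → (Fin N → ℝ) := fun x i => (w x)⁻¹ * f i x with hφ_def
  have hφm : Measurable φ :=
    measurable_pi_lambda _ fun i => hwm.inv.mul (hfm i)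
  have hφsq : ∀ x, w x ≠ 0 → (∑ i, (φ x i) ^ 2) = 1 := by
    intro x hx
    have hnn : 0 ≤ ∑ j, (f j x) ^ 2 := Finset.sum_nonneg fun j _ => sq_nonneg _
    have hsq : w x ^ 2 = ∑ j, (f j x) ^ 2 := Real.sq_sqrt hnn
    have : (∑ i, (φ x i) ^ 2) = (w x)⁻¹ ^ 2 * ∑ j, (f j x) ^ 2 := by
      rw [Finset.mul_sum]
      refine Finset.sum_congr rfl fun i _ => by ring
    rw [this, ← hsq]
    field_simp
  have hnegm : Measurable (fun η : Fin N → ℝ => -η) :=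
    measurable_pi_lambda _ fun i => (measurable_pi_apply i).neg
  set ρ₀ : Measure (Fin N → ℝ) := μ.map φ with hρ₀_def
  haveI : IsFiniteMeasure ρ₀ := by
    constructor
    rw [hρ₀_def, Measure.map_apply hφm MeasurableSet.univ]
    exact measure_lt_top μ _
  set ρ : Measure (Fin N → ℝ) := ρ₀ + ρ₀.map (fun η => -η) with hρ_def
  haveI : IsFiniteMeasure (ρ₀.map (fun η => -η)) := by
    constructor
    rw [Measure.map_apply hnegm MeasurableSet.univ]
    exact measure_lt_top ρ₀ _
  haveI hρfin : IsFiniteMeasure ρ := by rw [hρ_def]; infer_instance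
  -- the bad set
  set S : Set (Fin N → ℝ) := {η : Fin N → ℝ | (∑ i, (η i) ^ 2) ≠ 1} with hS_def
  have hSm : MeasurableSet S := by
    have hsum : Measurable (fun η : Fin N → ℝ => ∑ i, (η i) ^ 2) :=
      Finset.measurable_sum _ fun i _ => (measurable_pi_apply i).pow_const 2
    exact hsum (measurableSet_singleton 1).compl
  have hSneg : (fun η : Fin N → ℝ => -η) ⁻¹' S = S := by
    ext η; simp [hS_def]
  have hρ₀S : ρ₀ S = 0 := by
    rw [hρ₀_def, Measure.map_apply hφm hSm]
    have hsub : φ ⁻¹' S ⊆ {x | w x = 0} := by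
      intro x hx
      by_contra hxx
      exact hx (hφsq x hxx)
    have hzm : MeasurableSet {x : X | w x = 0} := hwm (measurableSet_singleton 0)
    have hz : μ {x | w x = 0} = 0 := by
      rw [hμ_def, withDensity_apply _ hzm]
      have heq : (∫⁻ x in {x | w x = 0}, ((w x).toNNReal : ENNReal) ∂ν)
          = ∫⁻ _ in {x | w x = 0}, (0 : ENNReal) ∂ν :=
        setLIntegral_congr_fun hzm (fun x hx => by
          simp only [Set.mem_setOf_eq] at hx
          simp [hx])
      rw [heq]
      simp
    exact le_antisymm (le_trans (measure_mono hsub) hz.le) (by simp)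
  have hρS : ρ S = 0 := by
    rw [hρ_def]
    simp only [Measure.add_apply]
    rw [Measure.map_apply hnegm hSm, hSneg, hρ₀S]
    simp
  -- evenness
  have heven : ρ.map (fun η => -η) = ρ := by
    rw [hρ_def, Measure.map_add _ _ hnegm, Measure.map_map hnegm hnegm]
    have : ((fun η : Fin N → ℝ => -η) ∘ fun η => -η) = id := by
      funext η; simp
    rw [this, Measure.map_id, add_comm]
  refine ⟨ρ, hρfin, heven, hρS, ?_⟩
  intro ξ
  set h : (Fin N → ℝ) → ℝ := fun η => |∑ i, ξ i * η i| with hh_def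
  have hhc : Continuous h := by
    apply continuous_abs.comp
    exact continuous_finset_sum _ fun i _ => (continuous_const.mul (continuous_apply i))
  -- integrability on sphere-supported finite measures
  have hint : ∀ (m : Measure (Fin N → ℝ)) [IsFiniteMeasure m], m S = 0 →
      Integrable h m := by
    intro m _ hm
    refine (integrable_const (∑ i, |ξ i|)).mono' hhc.aestronglyMeasurable ?_
    have : ∀ᵐ η ∂m, (∑ i, (η i) ^ 2) = 1 := by
      rw [ae_iff]; exact hm
    filter_upwards [this] with η hη
    rw [Real.norm_eq_abs, hh_def, abs_abs]
    calc |∑ i, ξ i * η i| ≤ ∑ i, |ξ i * η i| := Finset.abs_sum_le_sum_abs _ _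
      _ ≤ ∑ i, |ξ i| := by
        refine Finset.sum_le_sum fun i _ => ?_
        rw [abs_mul]
        have hi : |η i| ≤ 1 := by
          have h1 : (η i) ^ 2 ≤ 1 := by
            rw [← hη]
            exact Finset.single_le_sum (f := fun j => (η j) ^ 2)
              (fun j _ => sq_nonneg _) (Finset.mem_univ i)
          nlinarith [sq_abs (η i), abs_nonneg (η i)]
        nlinarith [abs_nonneg (ξ i)]
  have hnegS : (ρ₀.map (fun η => -η)) S = 0 := by
    rw [Measure.map_apply hnegm hSm, hSneg, hρ₀S]
  -- symmetrize
  have hsymm : (∫ η, h η ∂ρ) = 2 * ∫ η, h η ∂ρ₀ := by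
    rw [hρ_def, integral_add_measure (hint ρ₀ hρ₀S) (hint _ hnegS)]
    have : (∫ η, h η ∂(ρ₀.map (fun η => -η))) = ∫ η, h η ∂ρ₀ := by
      rw [integral_map hnegm.aemeasurable hhc.aestronglyMeasurable]
      refine integral_congr_ae (ae_of_all _ fun η => ?_)
      simp [hh_def, ← abs_neg (∑ i, ξ i * η i), ← Finset.sum_neg_distrib]
    rw [this]; ring
  -- compute ∫ h dρ₀
  have hmain : (∫ η, h η ∂ρ₀) = ∫ x, |∑ n, ξ n * f n x| ∂ν := by
    rw [hρ₀_def, integral_map hφm.aemeasurable hhc.aestronglyMeasurable,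
      hμ_def, integral_withDensity_eq_integral_smul hwm.real_toNNReal]
    refine integral_congr_ae (ae_of_all _ fun x => ?_)
    show (w x).toNNReal • h (φ x) = |∑ n, ξ n * f n x|
    rw [NNReal.smul_def, smul_eq_mul, Real.coe_toNNReal _ (hw0 x)]
    by_cases hx : w x = 0
    · simp [hh_def, hx, hwz x hx]
    · have hwpos : 0 < w x := lt_of_le_of_ne (hw0 x) (Ne.symm hx)
      have : (∑ i, ξ i * φ x i) = (w x)⁻¹ * ∑ i, ξ i * f i x := by
        rw [Finset.mul_sum]
        exact Finset.sum_congr rfl fun i _ => by rw [hφ_def]; ring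
      rw [hh_def]
      simp only [this, abs_mul, abs_of_nonneg (inv_nonneg.mpr (hw0 x))]
      field_simp
  have hFf : (∫ x, |∑ n, ξ n * F n x| ∂ν) = ∫ x, |∑ n, ξ n * f n x| ∂ν := by
    refine integral_congr_ae ?_
    have : ∀ᵐ x ∂ν, ∀ n, F n x = f n x := ae_all_iff.mpr hfe
    filter_upwards [this] with x hx
    simp only [hx]
  rw [hFf, hsymm, hmain]
  ring
end

section
/- Let $F_1,\dots,F_N$ be $\mathbb{R}$-linearly independent simple functions in $L^1(X,\nu)$ with representation $F_l = \sum_{m=1}^M a_{lm}\chi_{E_m}$ for an $N\times M$ rank-$N$ matrix $A=(a_{lm})$ and disjoint measurable sets $E_m$ with $0<\nu(E_m)<\infty$. Then $\int_{X^N}|\det(F_l(x_n))|\,d\nu^N(\mathbf{x}) = N!\sum_{|I|=N}|\det A_I|\prod_{m\in I}\nu(E_m)$, where the sum is over $N$-element subsets $I\subseteq\{1,\dots,M\}$ and $A_I$ is the submatrix of $A$ with columns in $I$. -/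
open MeasureTheory

/-- The identity (4.17): for simple functions `F_l = ∑_m a_{lm} χ_{E_m}` with
`A = (a_{lm})` of rank `N` and the `E_m` disjoint measurable sets of finite
positive measure,
`∫_{X^N} |det(F_l(x_n))| dν^N = N! ∑_{|I|=N} |det A_I| ∏_{m ∈ I} ν(E_m)`. -/
theorem stmt19 {X : Type*} [MeasurableSpace X] (ν : Measure X) [SigmaFinite ν]
    (N M : ℕ) (A : Matrix (Fin N) (Fin M) ℝ) (hA : A.rank = N)
    (E : Fin M → Set X) (hE : ∀ m, MeasurableSet (E m))
    (hdisj : Pairwise fun m m' => Disjoint (E m) (E m'))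
    (hpos : ∀ m, 0 < ν (E m)) (hfin : ∀ m, ν (E m) < ⊤)
    (F : Fin N → X → ℝ)
    (hF : ∀ l x, F l x = ∑ m, A l m * (E m).indicator (fun _ => (1 : ℝ)) x)
    (hind : ∀ ξ : Fin N → ℝ, (∫ x, |∑ l, ξ l * F l x| ∂ν) = 0 → ξ = 0) :
    ∫ x : Fin N → X, |Matrix.det (Matrix.of fun l n => F l (x n))|
        ∂(Measure.pi fun _ => ν)
      = (N.factorial : ℝ) *
        ∑ I ∈ (Finset.powersetCard N (Finset.univ : Finset (Fin M))).attach,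
          |(A.submatrix id fun i =>
              ((I.1.orderIsoOfFin (Finset.mem_powersetCard_univ.mp I.2) i : Fin M))).det| *
            ∏ i : Fin N,
              (ν (E ((I.1.orderIsoOfFin (Finset.mem_powersetCard_univ.mp I.2) i : Fin M)))).toReal := by
  classical
  -- abbreviation for the term attached to a map g : Fin N → Fin M
  set T : (Fin N → Fin M) → ℝ := fun g =>
    |(A.submatrix id g).det| * ∏ n : Fin N, (ν (E (g n))).toReal with hT
  -- Step 1: pointwise identity
  have key : ∀ x : Fin N → X,
      |Matrix.det (Matrix.of fun l n => F l (x n))| =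
        ∑ g : Fin N → Fin M, |(A.submatrix id g).det| *
          ∏ n : Fin N, (E (g n)).indicator (fun _ => (1:ℝ)) (x n) := by
    intro x
    by_cases h : ∀ n, ∃ m, x n ∈ E m
    · choose g0 hg0 using h
      have hFx : ∀ l n, F l (x n) = A l (g0 n) := by
        intro l n
        rw [hF]
        rw [Finset.sum_eq_single (g0 n)]
        · rw [Set.indicator_of_mem (hg0 n), mul_one]
        · intro m _ hm
          rw [Set.indicator_of_notMem, mul_zero]
          exact fun hx => (Set.disjoint_left.mp (hdisj hm)) hx (hg0 n)
        · simp
      have hdet : (Matrix.of fun l n => F l (x n)) = A.submatrix id g0 := by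
        ext l n; simp [hFx, Matrix.submatrix]
      rw [hdet, Finset.sum_eq_single g0]
      · rw [Finset.prod_eq_one, mul_one]
        intro n _
        rw [Set.indicator_of_mem (hg0 n)]
      · intro g _ hg
        obtain ⟨n, hn⟩ := Function.ne_iff.mp hg
        rw [Finset.prod_eq_zero (Finset.mem_univ n), mul_zero]
        rw [Set.indicator_of_notMem]
        exact fun hx => (Set.disjoint_left.mp (hdisj hn)) hx (hg0 n)
      · simp
    · push_neg at h
      obtain ⟨n, hn⟩ := h
      have h1 : Matrix.det (Matrix.of fun l n => F l (x n)) = 0 := by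
        apply Matrix.det_eq_zero_of_column_eq_zero n
        intro l
        simp only [Matrix.of_apply]
        rw [hF]
        apply Finset.sum_eq_zero
        intro m _
        rw [Set.indicator_of_notMem (hn m), mul_zero]
      rw [h1, abs_zero]
      symm
      apply Finset.sum_eq_zero
      intro g _
      rw [Finset.prod_eq_zero (Finset.mem_univ n), mul_zero]
      exact Set.indicator_of_notMem (hn (g n)) _
  -- Step 2: integrate the sum
  have hfun : (fun x : Fin N → X => |Matrix.det (Matrix.of fun l n => F l (x n))|) =
      fun x => ∑ g : Fin N → Fin M, |(A.submatrix id g).det| *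
          ∏ n : Fin N, (E (g n)).indicator (fun _ => (1:ℝ)) (x n) := funext key
  rw [hfun]
  -- rewrite the product of indicators as indicator of a pi set
  have hprod : ∀ (g : Fin N → Fin M) (x : Fin N → X),
      (∏ n : Fin N, (E (g n)).indicator (fun _ => (1:ℝ)) (x n)) =
        (Set.univ.pi fun n => E (g n)).indicator (fun _ => (1:ℝ)) x := by
    intro g x
    by_cases h : ∀ n, x n ∈ E (g n)
    · rw [Set.indicator_of_mem (by simpa [Set.mem_pi] using h)]
      exact Finset.prod_eq_one fun n _ => Set.indicator_of_mem (h n) _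
    · push_neg at h
      obtain ⟨n, hn⟩ := h
      rw [Set.indicator_of_notMem (by simp [Set.mem_pi]; exact ⟨n, hn⟩)]
      rw [Finset.prod_eq_zero (Finset.mem_univ n) (Set.indicator_of_notMem hn _)]
  have hpimeas : ∀ g : Fin N → Fin M, MeasurableSet (Set.univ.pi fun n => E (g n)) :=
    fun g => MeasurableSet.univ_pi fun n => hE (g n)
  have hint : ∀ g : Fin N → Fin M, Integrable
      (fun x : Fin N → X => |(A.submatrix id g).det| *
          ∏ n : Fin N, (E (g n)).indicator (fun _ => (1:ℝ)) (x n))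
      (Measure.pi fun _ => ν) := by
    intro g
    simp_rw [hprod g]
    apply Integrable.const_mul
    rw [integrable_indicator_iff (hpimeas g)]
    apply (integrableOn_const_iff (by simp)).mpr
    right
    rw [Measure.pi_pi]
    exact ENNReal.prod_lt_top fun n _ => hfin (g n)
  rw [integral_finset_sum _ fun g _ => hint g]
  have hval : ∀ g : Fin N → Fin M,
      (∫ x : Fin N → X, |(A.submatrix id g).det| *
          ∏ n : Fin N, (E (g n)).indicator (fun _ => (1:ℝ)) (x n)
        ∂(Measure.pi fun _ => ν)) = T g := by
    intro g
    simp_rw [hprod g]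
    rw [integral_const_mul, integral_indicator_const (1:ℝ) (hpimeas g), smul_eq_mul,
      mul_one, measureReal_def, Measure.pi_pi, ENNReal.toReal_prod]
  simp_rw [hval]
  -- Step 3: combinatorial regrouping
  set P := (Finset.powersetCard N (Finset.univ : Finset (Fin M))).attach with hP
  set gI : {s // s ∈ Finset.powersetCard N (Finset.univ : Finset (Fin M))} → Fin N → Fin M :=
    fun I i => ((I.1.orderIsoOfFin (Finset.mem_powersetCard_univ.mp I.2) i : Fin M)) with hgI
  have hginj : ∀ I, Function.Injective (gI I) := fun I a b hab =>
    (I.1.orderIsoOfFin (Finset.mem_powersetCard_univ.mp I.2)).injective (Subtype.ext hab)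
  have himg : ∀ I, Finset.univ.image (gI I) = I.1 := by
    intro I; ext m
    simp only [Finset.mem_image, Finset.mem_univ, true_and]
    constructor
    · rintro ⟨i, rfl⟩; exact (I.1.orderIsoOfFin (Finset.mem_powersetCard_univ.mp I.2) i).2
    · intro hm
      refine ⟨(I.1.orderIsoOfFin (Finset.mem_powersetCard_univ.mp I.2)).symm ⟨m, hm⟩, ?_⟩
      show ((I.1.orderIsoOfFin (Finset.mem_powersetCard_univ.mp I.2))
          ((I.1.orderIsoOfFin (Finset.mem_powersetCard_univ.mp I.2)).symm ⟨m, hm⟩) : Fin M) = m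
      rw [OrderIso.apply_symm_apply]
  have hTzero : ∀ g, ¬ Function.Injective g → T g = 0 := by
    intro g hg
    obtain ⟨a, b, hab, hne⟩ := Function.not_injective_iff.mp hg
    rw [hT]
    simp only
    rw [Matrix.det_zero_of_column_eq hne (fun k => by simp [Matrix.submatrix, hab]),
      abs_zero, zero_mul]
  have hTperm : ∀ (g : Fin N → Fin M) (σ : Equiv.Perm (Fin N)), T (g ∘ σ) = T g := by
    intro g σ
    rw [hT]
    simp only
    have h1 : A.submatrix id (g ∘ σ) = (A.submatrix id g).submatrix id σ := by
      rw [Matrix.submatrix_submatrix]; rfl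
    rw [h1, Matrix.det_permute', abs_mul, abs_unit_intCast, one_mul]
    simp only [Function.comp_apply]
    rw [Equiv.prod_comp σ (fun n => (ν (E (g n))).toReal)]
  calc ∑ g : Fin N → Fin M, T g
      = ∑ g ∈ Finset.univ.filter (fun g : Fin N → Fin M => Function.Injective g), T g := by
        rw [Finset.sum_filter_of_ne]
        intro g _ hg
        by_contra hinj
        exact hg (hTzero g hinj)
    _ = ∑ p ∈ P ×ˢ (Finset.univ : Finset (Equiv.Perm (Fin N))), T (gI p.1 ∘ p.2) := by
        symm
        apply Finset.sum_nbij (fun p => gI p.1 ∘ p.2)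
        · intro p _
          simp only [Finset.mem_filter, Finset.mem_univ, true_and]
          exact (hginj p.1).comp p.2.injective
        · rintro ⟨I, σ⟩ _ ⟨J, τ⟩ _ hpq
          simp only at hpq
          have himeq : I.1 = J.1 := by
            have h1 : Finset.univ.image (gI I ∘ σ) = Finset.univ.image (gI J ∘ τ) := by
              rw [hpq]
            rwa [← Finset.image_image, ← Finset.image_image, Finset.image_univ_equiv,
              Finset.image_univ_equiv, himg, himg] at h1
          have hIeq : I = J := Subtype.ext himeq
          subst hIeq
          have hστ : σ = τ := Equiv.ext fun n => hginj I (congrFun hpq n)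
          rw [hστ]
        · intro g hg
          simp only [Finset.coe_filter, Finset.mem_univ, true_and, Set.mem_setOf_eq] at hg
          have hcard : (Finset.univ.image g).card = N := by
            rw [Finset.card_image_of_injective _ hg, Finset.card_univ, Fintype.card_fin]
          set I : {s // s ∈ Finset.powersetCard N (Finset.univ : Finset (Fin M))} :=
            ⟨Finset.univ.image g, Finset.mem_powersetCard_univ.mpr hcard⟩ with hI
          have hmem : ∀ n, g n ∈ I.1 := fun n => Finset.mem_image_of_mem g (Finset.mem_univ n)
          set t : Fin N → Fin N := fun n =>
            (I.1.orderIsoOfFin (Finset.mem_powersetCard_univ.mp I.2)).symm ⟨g n, hmem n⟩ with ht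
          have htinj : Function.Injective t := by
            intro a b hab
            apply hg
            have := (I.1.orderIsoOfFin (Finset.mem_powersetCard_univ.mp I.2)).symm.injective hab
            exact congrArg Subtype.val this
          have htbij : Function.Bijective t := Finite.injective_iff_bijective.mp htinj
          refine ⟨(I, Equiv.ofBijective t htbij), by simp [hP], ?_⟩
          funext n
          simp only [Function.comp_apply, Equiv.ofBijective_apply, hgI, ht]
          rw [OrderIso.apply_symm_apply]
        · intro p _
          rfl
    _ = ∑ I ∈ P, ∑ σ : Equiv.Perm (Fin N), T (gI I ∘ σ) := by rw [Finset.sum_product]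
    _ = ∑ I ∈ P, (N.factorial : ℝ) * T (gI I) := by
        apply Finset.sum_congr rfl
        intro I _
        simp_rw [hTperm (gI I)]
        rw [Finset.sum_const, Finset.card_univ, Fintype.card_perm, Fintype.card_fin,
          nsmul_eq_mul]
    _ = (N.factorial : ℝ) * ∑ I ∈ P, T (gI I) := by rw [Finset.mul_sum]
    _ = _ := rfl
end
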